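/- arXiv:1004.5236 — 2 statements merged into one kernel-verified Lean document; each statement's English description precedes it below -/
import Mathlib

section
/- There is a constant c₀ > 0 and N : ℕ such that for every n ≥ N there exists a matrix A : Matrix (Fin n) (Fin n) (ZMod 2) such that every depth-2 circuit with linear output gates computing the linear operator x ↦ A.mulVec x has at least c₀ * n^2 / Real.logb 2 n wires. -/
open Matrix

/-- `g` depends only on the coordinates in `T`. -/
def DependsOnlyOn {k : ℕ} (g : (Fin k → ZMod 2) → ZMod 2) (T : Finset (Fin k)) : Prop :=
  ∀ u v : Fin k → ZMod 2, (∀ i ∈ T, u i = v i) → g u = g v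

/-- The number of nonzero entries of a matrix. -/
def nnz {α β : Type*} [Fintype α] [Fintype β] (M : Matrix α β (ZMod 2)) : ℕ :=
  (Finset.univ.filter (fun p : α × β => M p.1 p.2 ≠ 0)).card

section Aux

open Finset

lemma LBaux.zmod2_add_self (x : ZMod 2) : x + x = 0 := by revert x; decide

lemma LBaux.zmod2_ne_zero {x : ZMod 2} (h : x ≠ 0) : x = 1 := by revert h; revert x; decide

/-- decode a sparse description into a 0-1 matrix -/
def LBaux.decodeMat {α β : Type*} [Fintype α] [DecidableEq α] [Fintype β] [DecidableEq β] {k : ℕ}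
    (f : Fin k → Option (α × β)) : Matrix α β (ZMod 2) :=
  fun i j => if ∃ a, f a = some (i, j) then 1 else 0

lemma LBaux.exists_encode {α β : Type*} [Fintype α] [DecidableEq α] [Fintype β] [DecidableEq β]
    (M : Matrix α β (ZMod 2)) (k : ℕ) (hk : nnz M ≤ k) :
    ∃ f : Fin k → Option (α × β), LBaux.decodeMat f = M := by
  classical
  set s : Finset (α × β) := Finset.univ.filter (fun p : α × β => M p.1 p.2 ≠ 0) with hs
  have hcard : s.card ≤ k := hk
  refine ⟨fun a => if h : (a : ℕ) < s.card then some ((s.equivFin.symm ⟨a, h⟩ : s) : α × β)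
    else none, ?_⟩
  ext i j
  by_cases hM : M i j = 0
  · have : ¬ ∃ a : Fin k, (if h : (a : ℕ) < s.card then
        some ((s.equivFin.symm ⟨a, h⟩ : s) : α × β) else none) = some (i, j) := by
      rintro ⟨a, ha⟩
      by_cases h : (a : ℕ) < s.card
      · rw [dif_pos h] at ha
        have hmem := (s.equivFin.symm ⟨a, h⟩).2
        rw [Option.some_inj] at ha
        rw [ha] at hmem
        simp [hs] at hmem
        exact hmem hM
      · rw [dif_neg h] at ha; cases ha
    simp only [LBaux.decodeMat, if_neg this, hM]
  · have hmem : (i, j) ∈ s := by simp [hs, hM]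
    set t := s.equivFin ⟨(i, j), hmem⟩ with ht
    have : ∃ a : Fin k, (if h : (a : ℕ) < s.card then
        some ((s.equivFin.symm ⟨a, h⟩ : s) : α × β) else none) = some (i, j) := by
      refine ⟨⟨(t : ℕ), lt_of_lt_of_le t.2 hcard⟩, ?_⟩
      rw [dif_pos (show ((t : ℕ) : ℕ) < s.card from t.2)]
      have : (⟨(t : ℕ), t.2⟩ : Fin s.card) = t := rfl
      rw [this, ht, Equiv.symm_apply_apply]
    simp only [LBaux.decodeMat, if_pos this, LBaux.zmod2_ne_zero hM]

lemma LBaux.nnz_transpose {α β : Type*} [Fintype α] [Fintype β] (M : Matrix α β (ZMod 2)) :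
    nnz Mᵀ = nnz M := by
  classical
  apply Finset.card_bij' (fun p _ => Prod.swap p) (fun p _ => Prod.swap p) <;>
    simp [Matrix.transpose, Prod.ext_iff]
  · intro a b hab; exact (Finset.mem_filter.1 hab).2
  · intro a b hab; exact Finset.mem_filter.2 ⟨Finset.mem_univ _, hab⟩

lemma LBaux.sum_dite_reindex {M : Type*} [AddCommMonoid M] {r w : ℕ} (J : Finset (Fin r))
    (hJw : J.card ≤ w) (F : Fin r → M) :
    (∑ t : Fin w, if h : (t : ℕ) < J.card then F ((J.equivFin.symm ⟨t, h⟩ : J) : Fin r) else 0)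
      = ∑ j ∈ J, F j := by
  classical
  have h1 : (∑ t : Fin w, if h : (t : ℕ) < J.card then
      F ((J.equivFin.symm ⟨t, h⟩ : J) : Fin r) else 0)
      = ∑ t ∈ (Finset.univ : Finset (Fin J.card)).map (Fin.castLEEmb hJw),
        (if h : (t : ℕ) < J.card then F ((J.equivFin.symm ⟨t, h⟩ : J) : Fin r) else 0) := by
    refine (Finset.sum_subset (Finset.subset_univ _) ?_).symm
    intro t _ ht
    rw [dif_neg]
    intro h
    exact ht (by simp [Fin.castLEEmb]; exact ⟨⟨t, h⟩, rfl⟩)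
  rw [h1, Finset.sum_map]
  have h2 : ∀ u : Fin J.card, (if h : ((Fin.castLEEmb hJw u : Fin w) : ℕ) < J.card then
      F ((J.equivFin.symm ⟨(Fin.castLEEmb hJw u : Fin w), h⟩ : J) : Fin r) else 0)
      = F ((J.equivFin.symm u : J) : Fin r) := by
    intro u
    rw [dif_pos (show ((Fin.castLEEmb hJw u : Fin w) : ℕ) < J.card from u.2)]
    congr 1
  rw [Finset.sum_congr rfl (fun u _ => h2 u)]
  rw [← Finset.sum_attach J (fun j => F j)]
  exact Fintype.sum_equiv J.equivFin.symm _ _ (fun u => rfl)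

lemma LBaux.nnz_dite_le {α : Type*} [Fintype α] [DecidableEq α] {r w : ℕ}
    (C : Matrix α (Fin r) (ZMod 2)) (J : Finset (Fin r)) :
    nnz (fun (i : α) (t : Fin w) =>
      if h : (t : ℕ) < J.card then C i ((J.equivFin.symm ⟨t, h⟩ : J) : Fin r) else 0)
      ≤ nnz C := by
  classical
  set σ : Fin J.card → Fin r := fun u => ((J.equivFin.symm u : J) : Fin r) with hσ
  have hσinj : Function.Injective σ :=
    Subtype.coe_injective.comp J.equivFin.symm.injective
  set s' : Finset (α × Fin w) := Finset.univ.filter (fun p : α × Fin w =>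
    (if h : ((p.2 : ℕ)) < J.card then C p.1 (σ ⟨p.2, h⟩) else 0) ≠ 0) with hs'
  show s'.card ≤ _
  rcases s'.eq_empty_or_nonempty with he | ⟨⟨i₀, t₀⟩, hne⟩
  · rw [he]; simp
  · have ht₀ : ((t₀ : ℕ)) < J.card := by
      by_contra h
      simp only [hs', Finset.mem_filter] at hne
      exact hne.2 (by rw [dif_neg h])
    apply Finset.card_le_card_of_injOn
      (fun p : α × Fin w => (p.1, if h : ((p.2 : ℕ)) < J.card then σ ⟨p.2, h⟩ else σ ⟨t₀, ht₀⟩))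
    · intro p hp
      rw [hs', Finset.mem_coe, Finset.mem_filter] at hp
      have hc : ((p.2 : ℕ)) < J.card := by
        by_contra h; exact hp.2 (by rw [dif_neg h])
      simp only [Finset.mem_coe, Finset.mem_filter, Finset.mem_univ, true_and]
      rw [dif_pos hc]
      have := hp.2; rw [dif_pos hc] at this; exact this
    · intro p hp q hq hpq
      rw [hs'] at hp hq
      simp only [Finset.mem_coe, Finset.mem_filter] at hp hq
      have hcp : ((p.2 : ℕ)) < J.card := by
        by_contra h; exact hp.2 (by rw [dif_neg h])
      have hcq : ((q.2 : ℕ)) < J.card := by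
        by_contra h; exact hq.2 (by rw [dif_neg h])
      simp only at hpq
      rw [dif_pos hcp, dif_pos hcq] at hpq
      have h1 : p.1 = q.1 := (Prod.mk.injEq .. ▸ hpq).1
      have h2 : σ ⟨p.2, hcp⟩ = σ ⟨q.2, hcq⟩ := (Prod.mk.injEq .. ▸ hpq).2
      have h3 : (⟨(p.2 : ℕ), hcp⟩ : Fin J.card) = ⟨(q.2 : ℕ), hcq⟩ := hσinj h2
      have h4 : (p.2 : ℕ) = (q.2 : ℕ) := congrArg (Fin.val (n := J.card)) h3
      exact Prod.ext h1 (Fin.ext h4)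

lemma LBaux.card_cols_le_nnz {n r : ℕ} (C : Matrix (Fin n) (Fin r) (ZMod 2)) :
    (Finset.univ.filter (fun j : Fin r => ∃ i, C i j ≠ 0)).card ≤ nnz C := by
  classical
  set J := Finset.univ.filter (fun j : Fin r => ∃ i, C i j ≠ 0) with hJ
  rcases J.eq_empty_or_nonempty with he | ⟨j₀, hj₀⟩
  · rw [he]; simp
  · simp only [hJ, Finset.mem_filter] at hj₀
    obtain ⟨i₀, hi₀⟩ := hj₀.2
    apply Finset.card_le_card_of_injOn
      (fun j => ((if h : ∃ i, C i j ≠ 0 then h.choose else i₀), j))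
    · intro j hj
      rw [hJ, Finset.mem_coe, Finset.mem_filter] at hj
      simp only [dif_pos hj.2]
      simp only [nnz, Finset.mem_coe, Finset.mem_filter, Finset.mem_univ, true_and]
      exact hj.2.choose_spec
    · intro p _ q _ hpq
      simp only at hpq
      exact (Prod.mk.injEq .. ▸ hpq).2

/-- reindex a factorization to inner dimension `w` -/
lemma LBaux.factor_reindex {n r w : ℕ} (C : Matrix (Fin n) (Fin r) (ZMod 2))
    (B : Matrix (Fin r) (Fin n) (ZMod 2)) (hw : nnz C + nnz B ≤ w) :
    ∃ (C' : Matrix (Fin n) (Fin w) (ZMod 2)) (B' : Matrix (Fin w) (Fin n) (ZMod 2)),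
      C' * B' = C * B ∧ nnz C' ≤ w ∧ nnz B' ≤ w := by
  classical
  set J : Finset (Fin r) := Finset.univ.filter (fun j => ∃ i, C i j ≠ 0) with hJ
  have hJw : J.card ≤ w :=
    le_trans (LBaux.card_cols_le_nnz C) (le_trans (Nat.le_add_right _ _) hw)
  set σ : Fin J.card → Fin r := fun u => ((J.equivFin.symm u : J) : Fin r) with hσ
  refine ⟨fun i t => if h : (t : ℕ) < J.card then C i (σ ⟨t, h⟩) else 0,
    fun t k => if h : (t : ℕ) < J.card then B (σ ⟨t, h⟩) k else 0, ?_, ?_, ?_⟩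
  · ext i k
    erw [Matrix.mul_apply, Matrix.mul_apply]
    have hterm : ∀ t : Fin w,
        (if h : (t : ℕ) < J.card then C i (σ ⟨t, h⟩) else 0) *
          (if h : (t : ℕ) < J.card then B (σ ⟨t, h⟩) k else 0)
        = (if h : (t : ℕ) < J.card then C i (σ ⟨t, h⟩) * B (σ ⟨t, h⟩) k else 0) := by
      intro t
      by_cases h : (t : ℕ) < J.card
      · rw [dif_pos h, dif_pos h, dif_pos h]
      · rw [dif_neg h, dif_neg h, dif_neg h, mul_zero]
    rw [Finset.sum_congr rfl (fun t _ => hterm t)]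
    rw [LBaux.sum_dite_reindex J hJw (fun j => C i j * B j k)]
    refine Finset.sum_subset (Finset.subset_univ _) ?_
    intro j _ hj
    rw [hJ] at hj
    simp only [Finset.mem_filter, Finset.mem_univ, true_and, not_exists, not_not] at hj
    rw [hj i, zero_mul]
  · exact le_trans (LBaux.nnz_dite_le C J) (le_trans (Nat.le_add_right _ _) hw)
  · refine le_trans ?_ (le_trans (Nat.le_add_left _ _) hw)
    calc nnz (fun (t : Fin w) k => if h : (t : ℕ) < J.card then B (σ ⟨t, h⟩) k else 0)
        = nnz (fun (k : Fin n) (t : Fin w) =>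
            if h : (t : ℕ) < J.card then Bᵀ k (σ ⟨t, h⟩) else 0)ᵀ := rfl
      _ = nnz (fun (k : Fin n) (t : Fin w) =>
            if h : (t : ℕ) < J.card then Bᵀ k (σ ⟨t, h⟩) else 0) := LBaux.nnz_transpose _
      _ ≤ nnz Bᵀ := LBaux.nnz_dite_le Bᵀ J
      _ = nnz B := LBaux.nnz_transpose B

/-- counting: some matrix admits no sparse factorization -/
lemma LBaux.exists_hard (n w : ℕ)
    (hcount : (n * w + 1) ^ w * (w * n + 1) ^ w < 2 ^ (n * n)) :
    ∃ A : Matrix (Fin n) (Fin n) (ZMod 2), ∀ (r : ℕ) (C : Matrix (Fin n) (Fin r) (ZMod 2))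
      (B : Matrix (Fin r) (Fin n) (ZMod 2)), A = C * B → w < nnz C + nnz B := by
  classical
  set D : ((Fin w → Option (Fin n × Fin w)) × (Fin w → Option (Fin w × Fin n))) →
      Matrix (Fin n) (Fin n) (ZMod 2) :=
    fun p => LBaux.decodeMat p.1 * LBaux.decodeMat p.2 with hD
  have hcard : Fintype.card ((Fin w → Option (Fin n × Fin w)) × (Fin w → Option (Fin w × Fin n)))
      < Fintype.card (Matrix (Fin n) (Fin n) (ZMod 2)) := by
    have h1 : Fintype.card (Matrix (Fin n) (Fin n) (ZMod 2)) = 2 ^ (n * n) := by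
      have h0 : Fintype.card (Fin n → Fin n → ZMod 2) = (2 ^ n) ^ n := by
        simp [Fintype.card_fun]
      show Fintype.card (Fin n → Fin n → ZMod 2) = _
      rw [h0, ← pow_mul]
    rw [h1]
    simpa [Fintype.card_fun] using hcount
  have hnsurj : ¬ Function.Surjective D := fun hs => absurd (Fintype.card_le_of_surjective D hs)
    (by omega)
  rw [Function.Surjective] at hnsurj
  push_neg at hnsurj
  obtain ⟨A, hA⟩ := hnsurj
  refine ⟨A, fun r C B hAB => ?_⟩
  by_contra hle
  push_neg at hle
  obtain ⟨C', B', hprod, hC', hB'⟩ := LBaux.factor_reindex C B hle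
  obtain ⟨f, hf⟩ := LBaux.exists_encode C' w hC'
  obtain ⟨g, hg⟩ := LBaux.exists_encode B' w hB'
  exact hA (f, g) (by rw [hD]; simp only; rw [hf, hg, hprod, hAB])

end Aux

/-- Some linear `n`-operators require `Ω(n²/log n)` wires in depth-2 circuits whose
output gates are linear (parities, possibly negated) while middle gates may be arbitrary. -/
theorem lower_bound_linear_output_gates :
    ∃ c₀ : ℝ, c₀ > 0 ∧ ∃ N : ℕ, ∀ n ≥ N,
      ∃ A : Matrix (Fin n) (Fin n) (ZMod 2),
        ∀ (r : ℕ) (S : Fin r → Finset (Fin n))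
          (h : (Fin n → ZMod 2) → (Fin r → ZMod 2))
          (C : Matrix (Fin n) (Fin r) (ZMod 2)) (c : Fin n → ZMod 2),
          (∀ j : Fin r, DependsOnlyOn (fun x => h x j) (S j)) →
          (∀ x : Fin n → ZMod 2, A.mulVec x = C.mulVec (h x) + c) →
          c₀ * (n : ℝ) ^ 2 / Real.logb 2 n ≤ ((∑ j : Fin r, (S j).card) + nnz C : ℕ) := by
  classical
  refine ⟨1/18, by norm_num, 2, fun n hn => ?_⟩
  set L : ℕ := Nat.clog 2 n with hLdef
  have hL1 : 1 ≤ L := Nat.clog_pos (by norm_num) (by omega)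
  set w : ℕ := n ^ 2 / (9 * L) with hwdef
  -- numeric: 8 * w * L < n ^ 2
  have hkey : 8 * (w * L) < n ^ 2 := by
    have hww : w = n ^ 2 / 9 / L := by rw [hwdef, Nat.div_div_eq_div_mul]
    have h1 : w * L ≤ n ^ 2 / 9 := by rw [hww]; exact Nat.div_mul_le_self _ _
    have h2 : n ^ 2 / 9 * 9 ≤ n ^ 2 := Nat.div_mul_le_self _ _
    have h4 : 4 ≤ n ^ 2 := by nlinarith
    omega
  have hwle : w ≤ n ^ 2 := Nat.div_le_self _ _
  -- counting hypothesis
  have hcount : (n * w + 1) ^ w * (w * n + 1) ^ w < 2 ^ (n * n) := by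
    have h3 : n * w ≤ n ^ 3 := by
      calc n * w ≤ n * n ^ 2 := Nat.mul_le_mul_left n hwle
        _ = n ^ 3 := by ring
    have h8 : 8 ≤ n ^ 3 := by
      calc (8 : ℕ) = 2 ^ 3 := rfl
        _ ≤ n ^ 3 := Nat.pow_le_pow_left hn 3
    have h9 : 2 * n ^ 3 ≤ n ^ 4 := by
      have := Nat.mul_le_mul_right (n ^ 3) hn
      calc 2 * n ^ 3 ≤ n * n ^ 3 := this
        _ = n ^ 4 := by ring
    have hb : n * w + 1 ≤ n ^ 4 := by omega
    have hb' : w * n + 1 ≤ n ^ 4 := by rw [Nat.mul_comm w n]; exact hb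
    have hle2 : n ≤ 2 ^ L := Nat.le_pow_clog (by norm_num) n
    have hnn : n * n = n ^ 2 := by ring
    calc (n * w + 1) ^ w * (w * n + 1) ^ w
        ≤ (n ^ 4) ^ w * (n ^ 4) ^ w :=
          Nat.mul_le_mul (Nat.pow_le_pow_left hb w) (Nat.pow_le_pow_left hb' w)
      _ = n ^ (8 * w) := by rw [← pow_mul, ← pow_add]; congr 1; ring
      _ ≤ (2 ^ L) ^ (8 * w) := Nat.pow_le_pow_left hle2 _
      _ = 2 ^ (8 * (w * L)) := by rw [← pow_mul]; congr 1; ring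
      _ < 2 ^ (n * n) := Nat.pow_lt_pow_right (by norm_num) (by omega)
  obtain ⟨A, hA⟩ := LBaux.exists_hard n w hcount
  refine ⟨A, fun r S h C c hdep heq => ?_⟩
  -- linearize the middle gates
  have hx2 : ∀ x : ZMod 2, x + x = 0 := fun x => LBaux.zmod2_add_self x
  set B : Matrix (Fin r) (Fin n) (ZMod 2) :=
    fun j k => h (Pi.single k 1) j + h 0 j with hBdef
  have hAB : A = C * B := by
    ext i k
    have h0 : (0 : Fin n → ZMod 2) = C.mulVec (h 0) + c := by
      rw [← heq 0, Matrix.mulVec_zero]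
    have hk := heq (Pi.single k 1)
    have hik : A i k = C.mulVec (h (Pi.single k 1)) i + c i := by
      have := congrFun hk i
      rw [Matrix.mulVec_single] at this
      simpa using this
    have hi0 : (0 : ZMod 2) = C.mulVec (h 0) i + c i := congrFun h0 i
    have hCB : (C * B) i k
        = C.mulVec (h (Pi.single k 1)) i + C.mulVec (h 0) i := by
      rw [Matrix.mul_apply, Matrix.mulVec, Matrix.mulVec]
      show ∑ j, C i j * (h (Pi.single k 1) j + h 0 j) = _
      rw [Finset.sum_congr rfl (fun j _ => mul_add (C i j) (h (Pi.single k 1) j) (h 0 j))]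
      rw [Finset.sum_add_distrib]
      rfl
    rw [hCB]
    have hcc := hx2 (c i)
    linear_combination -hik - hi0 - hcc + hx2 (A i k) - hx2 ((C *ᵥ h (Pi.single k 1)) i) - hx2 ((C *ᵥ h 0) i)
  -- bound the number of nonzero entries of B by the total fan-in of middle gates
  have hnnzB : nnz B ≤ ∑ j : Fin r, (S j).card := by
    have hsub : (Finset.univ.filter (fun p : Fin r × Fin n => B p.1 p.2 ≠ 0))
        ⊆ Finset.univ.biUnion (fun j : Fin r => (S j).image (fun k => (j, k))) := by
      intro p hp
      rw [Finset.mem_filter] at hp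
      have hmem : p.2 ∈ S p.1 := by
        by_contra hns
        apply hp.2
        have hagree : ∀ i ∈ S p.1, (Pi.single p.2 1 : Fin n → ZMod 2) i = (0 : Fin n → ZMod 2) i := by
          intro i hi
          have : i ≠ p.2 := fun hE => hns (hE ▸ hi)
          simp [Pi.single_eq_of_ne this]
        have hdd := hdep p.1 (Pi.single p.2 1) 0 hagree
        simp only at hdd
        show h (Pi.single p.2 1) p.1 + h 0 p.1 = 0
        rw [hdd]
        exact hx2 _
      rw [Finset.mem_biUnion]
      exact ⟨p.1, Finset.mem_univ _, Finset.mem_image.2 ⟨p.2, hmem, Prod.mk.eta⟩⟩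
    calc nnz B ≤ (Finset.univ.biUnion (fun j : Fin r => (S j).image (fun k => (j, k)))).card :=
          Finset.card_le_card hsub
      _ ≤ ∑ j : Fin r, ((S j).image (fun k => (j, k))).card := Finset.card_biUnion_le
      _ ≤ ∑ j : Fin r, (S j).card := Finset.sum_le_sum (fun j _ => Finset.card_image_le)
  -- wires lower bound in ℕ
  have hwires : w + 1 ≤ (∑ j : Fin r, (S j).card) + nnz C := by
    have hwlt : w < nnz C + nnz B := hA r C B hAB
    omega
  -- final real arithmetic
  have hlogpos : (0 : ℝ) < Real.logb 2 n := by
    apply Real.logb_pos (by norm_num)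
    exact_mod_cast (by omega : 1 < n)
  have hLlog : (L : ℝ) ≤ 2 * Real.logb 2 n := by
    have hlog1 : 1 ≤ Nat.log 2 n := Nat.log_pos (by norm_num) (by omega)
    have hclog : L ≤ Nat.log 2 n + 1 := by
      rw [hLdef, Nat.clog_le_iff_le_pow (by norm_num)]
      exact (Nat.lt_pow_succ_log_self (by norm_num) n).le
    have hnatlog : (Nat.log 2 n : ℝ) ≤ Real.logb 2 n := by
      have h1 : (2 : ℝ) ^ (Nat.log 2 n) ≤ n := by
        exact_mod_cast Nat.pow_log_le_self 2 (by omega : n ≠ 0)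
      calc (Nat.log 2 n : ℝ) = Real.logb 2 ((2 : ℝ) ^ (Nat.log 2 n)) := by
            rw [Real.logb_pow, Real.logb_self_eq_one] <;> norm_num
        _ ≤ Real.logb 2 n := Real.logb_le_logb_of_le (by norm_num) (by positivity) h1
    have : (L : ℝ) ≤ (Nat.log 2 n : ℝ) + 1 := by exact_mod_cast hclog
    calc (L : ℝ) ≤ (Nat.log 2 n : ℝ) + 1 := this
      _ ≤ 2 * (Nat.log 2 n : ℝ) := by push_cast; linarith [show (1:ℝ) ≤ (Nat.log 2 n : ℝ) by exact_mod_cast hlog1]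
      _ ≤ 2 * Real.logb 2 n := by linarith
  have hLR : (0 : ℝ) < (L : ℝ) := by exact_mod_cast hL1
  have h9L : (0 : ℝ) < 9 * (L : ℝ) := by positivity
  have hcast : ((w : ℝ) + 1) ≤ (((∑ j : Fin r, (S j).card) + nnz C : ℕ) : ℝ) := by
    exact_mod_cast hwires
  have hdivlt : (n : ℝ) ^ 2 / (9 * (L : ℝ)) < (w : ℝ) + 1 := by
    rw [div_lt_iff₀ h9L]
    have hnat : n ^ 2 < (w + 1) * (9 * L) := by
      have hmod : 9 * L * w + n ^ 2 % (9 * L) = n ^ 2 := Nat.div_add_mod (n ^ 2) (9 * L)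
      have hmlt : n ^ 2 % (9 * L) < 9 * L := Nat.mod_lt _ (by omega)
      calc n ^ 2 = 9 * L * w + n ^ 2 % (9 * L) := hmod.symm
        _ < 9 * L * w + 9 * L := by omega
        _ = (w + 1) * (9 * L) := by ring
    exact_mod_cast hnat
  have hfirst : 1 / 18 * (n : ℝ) ^ 2 / Real.logb 2 n ≤ (n : ℝ) ^ 2 / (9 * (L : ℝ)) := by
    have he : 1 / 18 * (n : ℝ) ^ 2 / Real.logb 2 n = (n : ℝ) ^ 2 / (18 * Real.logb 2 n) := by
      rw [mul_comm, mul_div_assoc, div_div]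
      congr 1
      ring
    rw [he]
    apply div_le_div_of_nonneg_left (by positivity) h9L
    linarith
  calc (1 / 18 : ℝ) * (n : ℝ) ^ 2 / Real.logb 2 n
      ≤ (n : ℝ) ^ 2 / (9 * (L : ℝ)) := hfirst
    _ ≤ (w : ℝ) + 1 := le_of_lt hdivlt
    _ ≤ _ := hcast
end

section
/- There is a constant K > 0 such that for every n ≥ 2 and every L ≥ 2, the cardinality of the set of matrices A : Matrix (Fin n) (Fin n) (ZMod 2) for which there exists a depth-2 circuit with linear middle gates computing x ↦ A.mulVec x with at most L wires is at most 2^(K * L * Real.logb 2 (n * L)). -/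
open Matrix

lemma zmod2_cases (z : ZMod 2) : z = 0 ∨ z = 1 := by revert z; decide

lemma count_small_finsets (X : Type*) [Fintype X] [DecidableEq X] (m : ℕ) :
    Nat.card {s : Finset X // s.card ≤ m} ≤ (m + 1) * (Fintype.card X + 1) ^ m := by
  classical
  rw [Nat.card_eq_fintype_card, Fintype.card_subtype]
  have hsub : (Finset.univ.filter (fun s : Finset X => s.card ≤ m)) ⊆
      (Finset.range (m + 1)).biUnion (fun k => Finset.powersetCard k Finset.univ) := by
    intro s hs
    simp only [Finset.mem_filter, Finset.mem_univ, true_and] at hs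
    simp only [Finset.mem_biUnion, Finset.mem_range, Finset.mem_powersetCard_univ]
    exact ⟨s.card, by omega, rfl⟩
  calc (Finset.univ.filter (fun s : Finset X => s.card ≤ m)).card
      ≤ ((Finset.range (m + 1)).biUnion (fun k => Finset.powersetCard k Finset.univ)).card :=
        Finset.card_le_card hsub
    _ ≤ ∑ k ∈ Finset.range (m + 1), (Finset.powersetCard k (Finset.univ : Finset X)).card :=
        Finset.card_biUnion_le
    _ ≤ ∑ k ∈ Finset.range (m + 1), (Fintype.card X + 1) ^ m := by
        refine Finset.sum_le_sum fun k hk => ?_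
        rw [Finset.card_powersetCard, Finset.card_univ]
        calc (Fintype.card X).choose k ≤ (Fintype.card X) ^ k := Nat.choose_le_pow _ _
          _ ≤ (Fintype.card X + 1) ^ k := Nat.pow_le_pow_left (by omega) _
          _ ≤ (Fintype.card X + 1) ^ m :=
              Nat.pow_le_pow_right (by omega) (by simpa using Nat.lt_succ_iff.mp (Finset.mem_range.mp hk))
    _ = (m + 1) * (Fintype.card X + 1) ^ m := by
        rw [Finset.sum_const, Finset.card_range, smul_eq_mul]

lemma span_step {n r : ℕ}
    (A : Matrix (Fin n) (Fin n) (ZMod 2)) (B : Matrix (Fin r) (Fin n) (ZMod 2))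
    (T : Fin n → Finset (Fin r)) (g : Fin n → ((Fin r → ZMod 2) → ZMod 2))
    (hdep : ∀ i, DependsOnlyOn (g i) (T i))
    (hcomp : ∀ x i, g i (B.mulVec x) = A.mulVec x i) (i : Fin n) :
    ∃ c : {j // j ∈ T i} → ZMod 2,
      ∀ k, A i k = ∑ j : {j // j ∈ T i}, c j * B j.1 k := by
  classical
  haveI : Fact (Nat.Prime 2) := ⟨Nat.prime_two⟩
  set Lf : {j // j ∈ T i} → ((Fin n → ZMod 2) →ₗ[ZMod 2] ZMod 2) :=
    fun j => LinearMap.proj j.1 ∘ₗ B.mulVecLin with hLf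
  set Kf : (Fin n → ZMod 2) →ₗ[ZMod 2] ZMod 2 := LinearMap.proj i ∘ₗ A.mulVecLin with hKf
  have hker : ⨅ j, LinearMap.ker (Lf j) ≤ LinearMap.ker Kf := by
    intro x hx
    simp only [Submodule.mem_iInf, LinearMap.mem_ker, LinearMap.comp_apply,
      Matrix.mulVecLin_apply, LinearMap.proj_apply, hLf, hKf] at hx ⊢
    have h1 : g i (B.mulVec x) = g i (B.mulVec 0) := by
      apply hdep i
      intro j hj
      rw [Matrix.mulVec_zero]
      exact hx ⟨j, hj⟩
    have h2 := hcomp x i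
    have h3 := hcomp 0 i
    rw [h1, h3, Matrix.mulVec_zero] at h2
    simpa using h2.symm
  have hspan := mem_span_of_iInf_ker_le_ker hker
  obtain ⟨c, hc⟩ := (Submodule.mem_span_range_iff_exists_fun _).1 hspan
  refine ⟨c, fun k => ?_⟩
  have := DFunLike.congr_fun hc (Pi.single k 1)
  simp only [LinearMap.coe_sum, Finset.sum_apply, LinearMap.smul_apply, smul_eq_mul,
    hLf, hKf, LinearMap.comp_apply, Matrix.mulVecLin_apply, Matrix.mulVec_single,
    LinearMap.proj_apply, mul_one, MulOpposite.op_one, one_smul] at this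
  exact this.symm

lemma key {n L r : ℕ} (hn : 0 < n)
    (A : Matrix (Fin n) (Fin n) (ZMod 2)) (B : Matrix (Fin r) (Fin n) (ZMod 2))
    (T : Fin n → Finset (Fin r)) (g : Fin n → ((Fin r → ZMod 2) → ZMod 2))
    (hdep : ∀ i, DependsOnlyOn (g i) (T i))
    (hcomp : ∀ x i, g i (B.mulVec x) = A.mulVec x i)
    (hw : nnz B + ∑ i, (T i).card ≤ L) :
    ∃ (B' : Matrix (Fin L) (Fin n) (ZMod 2)) (S' : Fin n → Finset (Fin L)),
      nnz B' ≤ L ∧ (∑ i, (S' i).card) ≤ L ∧ ∀ i k, A i k = ∑ l ∈ S' i, B' l k := by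
  classical
  choose c hc using span_step A B T g hdep hcomp
  set N : Finset (Fin r) := Finset.univ.filter (fun j => ∃ k, B j k ≠ 0) with hNdef
  have hNcard : N.card ≤ nnz B := by
    show N.card ≤ (Finset.univ.filter (fun p : Fin r × Fin n => B p.1 p.2 ≠ 0)).card
    apply Finset.card_le_card_of_injOn
      (fun j => (j, if h : ∃ k, B j k ≠ 0 then h.choose else ⟨0, hn⟩))
    · intro j hj
      simp only [hNdef, Finset.mem_coe, Finset.mem_filter, Finset.mem_univ, true_and] at hj
      simp only [Finset.mem_coe]
      rw [dif_pos hj]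
      simp only [Finset.mem_filter, Finset.mem_univ, true_and]
      exact hj.choose_spec
    · intro a _ b _ hab
      exact congrArg Prod.fst hab
  have hBL : nnz B ≤ L := le_trans (Nat.le_add_right _ _) hw
  have hTL : ∑ i, (T i).card ≤ L := le_trans (Nat.le_add_left _ _) hw
  obtain ⟨e⟩ : Nonempty ({j // j ∈ N} ↪ Fin L) := by
    apply Function.Embedding.nonempty_of_card_le
    simpa [Fintype.card_coe] using le_trans hNcard hBL
  set B' : Matrix (Fin L) (Fin n) (ZMod 2) :=
    Matrix.of (fun l k => ∑ j : {j // j ∈ N}, if e j = l then B j.1 k else 0) with hB'def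
  have B'e : ∀ (j : {j // j ∈ N}) (k), B' (e j) k = B j.1 k := by
    intro j k
    show (∑ j' : {j // j ∈ N}, if e j' = e j then B j'.1 k else 0) = B j.1 k
    rw [Finset.sum_eq_single j]
    · rw [if_pos rfl]
    · intro b _ hb; rw [if_neg (fun h => hb (e.injective h))]
    · intro h; exact absurd (Finset.mem_univ j) h
  have B'0 : ∀ l, (∀ j : {j // j ∈ N}, e j ≠ l) → ∀ k, B' l k = 0 := by
    intro l h k
    show (∑ j : {j // j ∈ N}, if e j = l then B j.1 k else 0) = 0
    exact Finset.sum_eq_zero (fun j _ => if_neg (h j))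
  set filterN : Fin n → Finset {j // j ∈ N} :=
    (fun i => Finset.univ.filter (fun j => ∃ h : j.1 ∈ T i, c i ⟨j.1, h⟩ = 1)) with hfilterN
  set S' : Fin n → Finset (Fin L) := fun i => (filterN i).image e with hS'
  have hS'card : ∀ i, (S' i).card ≤ (T i).card := by
    intro i
    refine le_trans Finset.card_image_le ?_
    apply Finset.card_le_card_of_injOn (fun j => j.1)
    · intro j hj
      simp only [hfilterN, Finset.mem_coe, Finset.mem_filter, Finset.mem_univ, true_and] at hj
      exact hj.choose
    · intro a _ b _ hab; exact Subtype.ext hab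
  refine ⟨B', S', ?_, ?_, ?_⟩
  · -- nnz B' ≤ L
    refine le_trans ?_ hBL
    show (Finset.univ.filter (fun p : Fin L × Fin n => B' p.1 p.2 ≠ 0)).card ≤
      (Finset.univ.filter (fun p : Fin r × Fin n => B p.1 p.2 ≠ 0)).card
    rcases isEmpty_or_nonempty {j // j ∈ N} with hE | hE
    · have hzero : ∀ p : Fin L × Fin n, B' p.1 p.2 = 0 := fun p =>
        B'0 p.1 (fun j => absurd (Nonempty.intro j) (not_nonempty_iff.2 hE)) p.2
      have : (Finset.univ.filter (fun p : Fin L × Fin n => B' p.1 p.2 ≠ 0)) = ∅ := by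
        apply Finset.filter_eq_empty_iff.2
        intro p _
        simpa using hzero p
      simp [this]
    · apply Finset.card_le_card_of_injOn
        (fun p => ((if h : ∃ j : {j // j ∈ N}, e j = p.1 then h.choose
            else Classical.arbitrary _).1, p.2))
      · intro p hp
        simp only [Finset.mem_coe, Finset.mem_filter, Finset.mem_univ, true_and] at hp ⊢
        have hex : ∃ j : {j // j ∈ N}, e j = p.1 := by
          by_contra hcon
          push_neg at hcon
          exact hp (B'0 p.1 hcon p.2)
        rw [dif_pos hex]
        have hBB : B' p.1 p.2 = B hex.choose.1 p.2 := by
          rw [← B'e hex.choose p.2, hex.choose_spec]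
        rwa [hBB] at hp
      · intro p hp q hq hpq
        simp only [Finset.coe_filter, Set.mem_setOf_eq, Finset.mem_univ, true_and] at hp hq
        have hexp : ∃ j : {j // j ∈ N}, e j = p.1 := by
          by_contra hcon; push_neg at hcon; exact hp (B'0 p.1 hcon p.2)
        have hexq : ∃ j : {j // j ∈ N}, e j = q.1 := by
          by_contra hcon; push_neg at hcon; exact hq (B'0 q.1 hcon q.2)
        simp only at hpq
        rw [dif_pos hexp, dif_pos hexq] at hpq
        have h2' := congrArg Prod.snd hpq
        have h1' := congrArg Prod.fst hpq
        have h2 : p.2 = q.2 := h2'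
        have h1 : hexp.choose = hexq.choose := Subtype.ext h1'
        have : p.1 = q.1 := by rw [← hexp.choose_spec, ← hexq.choose_spec, h1]
        exact Prod.ext this h2
  · -- sum of card
    exact le_trans (Finset.sum_le_sum (fun i _ => hS'card i)) hTL
  · -- main identity
    intro i k
    rw [hc i k]
    rw [hS', Finset.sum_image (fun a _ b _ h => e.injective h)]
    rw [Finset.sum_congr rfl (fun j _ => B'e j k)]
    -- LHS: ∑ j : {j // j ∈ T i}, c i j * B j.1 k = ∑ j ∈ filterN i, B j.1 k
    have hstep1 : ∑ j : {j // j ∈ T i}, c i j * B j.1 k =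
        ∑ j ∈ Finset.univ.filter (fun j : {j // j ∈ T i} => c i j = 1 ∧ j.1 ∈ N),
          c i j * B j.1 k := by
      rw [Finset.sum_filter_of_ne]
      intro j _ hne
      constructor
      · rcases zmod2_cases (c i j) with h | h
        · exact absurd (by rw [h, zero_mul]) hne
        · exact h
      · simp only [hNdef, Finset.mem_filter, Finset.mem_univ, true_and]
        refine ⟨k, fun h0 => hne ?_⟩
        rw [h0, mul_zero]
    rw [hstep1]
    have hstep2 : ∑ j ∈ Finset.univ.filter (fun j : {j // j ∈ T i} => c i j = 1 ∧ j.1 ∈ N),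
          c i j * B j.1 k =
        ∑ j ∈ Finset.univ.filter (fun j : {j // j ∈ T i} => c i j = 1 ∧ j.1 ∈ N),
          B j.1 k := by
      refine Finset.sum_congr rfl fun j hj => ?_
      simp only [Finset.mem_filter] at hj
      rw [hj.2.1, one_mul]
    rw [hstep2]
    refine Finset.sum_bij
      (i := fun (j : {j // j ∈ T i})
        (hj : j ∈ Finset.univ.filter (fun j : {j // j ∈ T i} => c i j = 1 ∧ j.1 ∈ N)) =>
        (⟨j.1, (Finset.mem_filter.1 hj).2.2⟩ : {j // j ∈ N})) ?_ ?_ ?_ ?_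
    · intro j hj
      simp only [hfilterN, Finset.mem_filter, Finset.mem_univ, true_and] at hj ⊢
      exact ⟨j.2, by convert hj.1⟩
    · intro a ha b hb hab
      have h2 := congrArg Subtype.val hab
      exact Subtype.ext h2
    · intro x hx
      simp only [hfilterN, Finset.mem_filter, Finset.mem_univ, true_and] at hx
      refine ⟨⟨x.1, hx.choose⟩, ?_, ?_⟩
      · simp only [Finset.mem_filter, Finset.mem_univ, true_and]
        exact ⟨hx.choose_spec, x.2⟩
      · exact Subtype.ext rfl
    · intro j hj
      rfl

lemma numeric_bound {n L : ℕ} (hn : 2 ≤ n) (hL : 2 ≤ L) :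
    ((L + 1) * (L * n + 1) ^ L) * ((L + 1) * (n * L + 1) ^ L) ≤ (n * L) ^ (6 * L) := by
  have hL1 : L + 1 ≤ n * L := by nlinarith
  have hm1 : n * L + 1 ≤ (n * L) ^ 2 := by nlinarith
  have hcomm : L * n = n * L := Nat.mul_comm _ _
  have hb1 : 1 ≤ n * L := by nlinarith
  have hb2 : (1 + 2 * L) + (1 + 2 * L) ≤ 6 * L := by omega
  have hfac : (L + 1) * (n * L + 1) ^ L ≤ (n * L) ^ (1 + 2 * L) := by
    have step1 : (L + 1) * (n * L + 1) ^ L ≤ (n * L) * ((n * L) ^ 2) ^ L :=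
      Nat.mul_le_mul hL1 (Nat.pow_le_pow_left hm1 L)
    have step2 : (n * L) * ((n * L) ^ 2) ^ L = (n * L) ^ (1 + 2 * L) := by
      rw [← pow_mul, pow_add, pow_one]
    rw [← step2]
    exact step1
  calc ((L + 1) * (L * n + 1) ^ L) * ((L + 1) * (n * L + 1) ^ L)
      ≤ (n * L) ^ (1 + 2 * L) * (n * L) ^ (1 + 2 * L) := by
        rw [hcomm]; exact Nat.mul_le_mul hfac hfac
    _ = (n * L) ^ ((1 + 2 * L) + (1 + 2 * L)) := by rw [← pow_add]
    _ ≤ (n * L) ^ (6 * L) := Nat.pow_le_pow_right hb1 hb2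

/-- The number of matrices `A` computable by a depth-2 circuit with linear middle gates
and at most `L` wires is at most `2^(K·L·log₂(nL))`. -/
theorem card_matrices_computable_linear_middle_le :
    ∃ K : ℝ, K > 0 ∧ ∀ n ≥ 2, ∀ L : ℕ, 2 ≤ L →
      (Nat.card {A : Matrix (Fin n) (Fin n) (ZMod 2) //
          ∃ (r : ℕ) (B : Matrix (Fin r) (Fin n) (ZMod 2))
            (T : Fin n → Finset (Fin r)) (g : Fin n → ((Fin r → ZMod 2) → ZMod 2)),
            (∀ i : Fin n, DependsOnlyOn (g i) (T i)) ∧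
            (∀ (x : Fin n → ZMod 2) (i : Fin n), g i (B.mulVec x) = A.mulVec x i) ∧
            nnz B + ∑ i : Fin n, (T i).card ≤ L} : ℝ)
        ≤ (2 : ℝ) ^ (K * (L : ℝ) * Real.logb 2 ((n : ℝ) * (L : ℝ))) := by
  classical
  refine ⟨6, by norm_num, ?_⟩
  intro n hn L hL
  have hn0 : 0 < n := by omega
  -- the decoding function
  set dec : Finset (Fin L × Fin n) → Finset (Fin n × Fin L) → Matrix (Fin n) (Fin n) (ZMod 2) :=
    fun P Q => Matrix.of (fun i k =>
      ∑ l ∈ Finset.univ.filter (fun l : Fin L => (i, l) ∈ Q),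
        (if (l, k) ∈ P then (1 : ZMod 2) else 0)) with hdec
  set E := ({P : Finset (Fin L × Fin n) // P.card ≤ L} ×
    {Q : Finset (Fin n × Fin L) // Q.card ≤ L}) with hE
  have hall : ∀ a : {A : Matrix (Fin n) (Fin n) (ZMod 2) //
          ∃ (r : ℕ) (B : Matrix (Fin r) (Fin n) (ZMod 2))
            (T : Fin n → Finset (Fin r)) (g : Fin n → ((Fin r → ZMod 2) → ZMod 2)),
            (∀ i : Fin n, DependsOnlyOn (g i) (T i)) ∧
            (∀ (x : Fin n → ZMod 2) (i : Fin n), g i (B.mulVec x) = A.mulVec x i) ∧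
            nnz B + ∑ i : Fin n, (T i).card ≤ L},
      ∃ PQ : E, dec PQ.1.1 PQ.2.1 = a.1 := by
    rintro ⟨A, r, B, T, g, hdep, hcomp, hw⟩
    obtain ⟨B', S', hB'L, hS'L, hAeq⟩ := key hn0 A B T g hdep hcomp hw
    set P : Finset (Fin L × Fin n) :=
      Finset.univ.filter (fun p : Fin L × Fin n => B' p.1 p.2 ≠ 0) with hP
    set Q : Finset (Fin n × Fin L) :=
      Finset.univ.filter (fun q : Fin n × Fin L => q.2 ∈ S' q.1) with hQ
    have hPcard : P.card ≤ L := hB'L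
    have hQcard : Q.card ≤ L := by
      have h1 : Q.card = ∑ i : Fin n, (Q.filter (fun q => q.1 = i)).card :=
        Finset.card_eq_sum_card_fiberwise (fun x _ => Finset.mem_univ x.1)
      have h2 : ∀ i : Fin n, (Q.filter (fun q => q.1 = i)).card = (S' i).card := by
        intro i
        have himg : Q.filter (fun q => q.1 = i) = (S' i).image (fun l => (i, l)) := by
          ext ⟨a, b⟩
          simp only [hQ, Finset.mem_filter, Finset.mem_univ, true_and, Finset.mem_image,
            Prod.mk.injEq]
          constructor
          · rintro ⟨hmem, rfl⟩; exact ⟨b, hmem, rfl, rfl⟩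
          · rintro ⟨l, hl, rfl, rfl⟩; exact ⟨hl, rfl⟩
        rw [himg, Finset.card_image_of_injective _ (fun x y h => (Prod.ext_iff.1 h).2)]
      rw [h1]
      calc ∑ i : Fin n, (Q.filter (fun q => q.1 = i)).card
          = ∑ i : Fin n, (S' i).card := Finset.sum_congr rfl (fun i _ => h2 i)
        _ ≤ L := hS'L
    refine ⟨⟨⟨P, hPcard⟩, ⟨Q, hQcard⟩⟩, ?_⟩
    ext i k
    show (∑ l ∈ Finset.univ.filter (fun l : Fin L => (i, l) ∈ Q),
        (if (l, k) ∈ P then (1 : ZMod 2) else 0)) = A i k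
    have hfq : Finset.univ.filter (fun l : Fin L => (i, l) ∈ Q) = S' i := by
      ext l
      simp [hQ]
    rw [hfq, hAeq i k]
    refine Finset.sum_congr rfl fun l _ => ?_
    simp only [hP, Finset.mem_filter, Finset.mem_univ, true_and]
    rcases zmod2_cases (B' l k) with h | h
    · rw [h]; simp
    · rw [h]; simp
  choose F hF using hall
  have hFinj : Function.Injective F := by
    intro a b hab
    apply Subtype.ext
    rw [← hF a, ← hF b, hab]
  have hcard1 : Nat.card {A : Matrix (Fin n) (Fin n) (ZMod 2) //
          ∃ (r : ℕ) (B : Matrix (Fin r) (Fin n) (ZMod 2))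
            (T : Fin n → Finset (Fin r)) (g : Fin n → ((Fin r → ZMod 2) → ZMod 2)),
            (∀ i : Fin n, DependsOnlyOn (g i) (T i)) ∧
            (∀ (x : Fin n → ZMod 2) (i : Fin n), g i (B.mulVec x) = A.mulVec x i) ∧
            nnz B + ∑ i : Fin n, (T i).card ≤ L} ≤ Nat.card E :=
    Nat.card_le_card_of_injective F hFinj
  -- counting E
  have hcardE : Nat.card E ≤ ((L + 1) * (L * n + 1) ^ L) * ((L + 1) * (n * L + 1) ^ L) := by
    rw [hE, Nat.card_prod]
    have hc1 : Fintype.card (Fin L × Fin n) = L * n := by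
      rw [Fintype.card_prod, Fintype.card_fin, Fintype.card_fin]
    have hc2 : Fintype.card (Fin n × Fin L) = n * L := by
      rw [Fintype.card_prod, Fintype.card_fin, Fintype.card_fin]
    apply Nat.mul_le_mul
    · calc Nat.card {P : Finset (Fin L × Fin n) // P.card ≤ L}
          ≤ (L + 1) * (Fintype.card (Fin L × Fin n) + 1) ^ L := count_small_finsets _ _
        _ = (L + 1) * (L * n + 1) ^ L := by rw [hc1]
    · calc Nat.card {Q : Finset (Fin n × Fin L) // Q.card ≤ L}
          ≤ (L + 1) * (Fintype.card (Fin n × Fin L) + 1) ^ L := count_small_finsets _ _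
        _ = (L + 1) * (n * L + 1) ^ L := by rw [hc2]
  -- numeric bound
  have hnum := numeric_bound hn hL
  have htotal : (Nat.card {A : Matrix (Fin n) (Fin n) (ZMod 2) //
          ∃ (r : ℕ) (B : Matrix (Fin r) (Fin n) (ZMod 2))
            (T : Fin n → Finset (Fin r)) (g : Fin n → ((Fin r → ZMod 2) → ZMod 2)),
            (∀ i : Fin n, DependsOnlyOn (g i) (T i)) ∧
            (∀ (x : Fin n → ZMod 2) (i : Fin n), g i (B.mulVec x) = A.mulVec x i) ∧
            nnz B + ∑ i : Fin n, (T i).card ≤ L}) ≤ (n * L) ^ (6 * L) :=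
    le_trans hcard1 (le_trans hcardE hnum)
  -- real side
  have hmpos : (0 : ℝ) < ((n * L : ℕ) : ℝ) := by
    have : 0 < n * L := by positivity
    exact_mod_cast this
  have hrr : (((n * L : ℕ) : ℝ)) ^ (6 * L) =
      (2 : ℝ) ^ ((6 : ℝ) * (L : ℝ) * Real.logb 2 (((n * L : ℕ) : ℝ))) := by
    have h2 : (2 : ℝ) ^ Real.logb 2 (((n * L : ℕ) : ℝ)) = ((n * L : ℕ) : ℝ) :=
      Real.rpow_logb (by norm_num) (by norm_num) hmpos
    calc (((n * L : ℕ) : ℝ)) ^ (6 * L)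
        = ((2 : ℝ) ^ Real.logb 2 (((n * L : ℕ) : ℝ))) ^ (6 * L) := by rw [h2]
      _ = ((2 : ℝ) ^ Real.logb 2 (((n * L : ℕ) : ℝ))) ^ (((6 * L : ℕ) : ℝ)) := by
          rw [Real.rpow_natCast]
      _ = (2 : ℝ) ^ (Real.logb 2 (((n * L : ℕ) : ℝ)) * ((6 * L : ℕ) : ℝ)) := by
          rw [← Real.rpow_mul (by norm_num)]
      _ = (2 : ℝ) ^ ((6 : ℝ) * (L : ℝ) * Real.logb 2 (((n * L : ℕ) : ℝ))) := by
          congr 1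
          push_cast
          ring
  have hcast : ((n : ℝ) * (L : ℝ)) = ((n * L : ℕ) : ℝ) := by push_cast; ring
  rw [hcast]
  calc (Nat.card {A : Matrix (Fin n) (Fin n) (ZMod 2) //
          ∃ (r : ℕ) (B : Matrix (Fin r) (Fin n) (ZMod 2))
            (T : Fin n → Finset (Fin r)) (g : Fin n → ((Fin r → ZMod 2) → ZMod 2)),
            (∀ i : Fin n, DependsOnlyOn (g i) (T i)) ∧
            (∀ (x : Fin n → ZMod 2) (i : Fin n), g i (B.mulVec x) = A.mulVec x i) ∧
            nnz B + ∑ i : Fin n, (T i).card ≤ L} : ℝ)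
      ≤ (((n * L) ^ (6 * L) : ℕ) : ℝ) := by exact_mod_cast htotal
    _ = (((n * L : ℕ) : ℝ)) ^ (6 * L) := by push_cast; ring
    _ = (2 : ℝ) ^ ((6 : ℝ) * (L : ℝ) * Real.logb 2 (((n * L : ℕ) : ℝ))) := hrr
end
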